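/- Let X be a random variable with values in [0,1] with distribution function F_0, and let Y be uniform on [0,1], independent of X. Then Var(X) + 1/12 ≥ ∫_0^1 F_0(t)(1-F_0(t)) dt, with equality if and only if F_0 is the uniform distribution function on [0,1]. -/

import Mathlib

open MeasureTheory Set intervalIntegral

/-- Rigidity: a monotone function a.e. equal to `t + m` on `(0,1]`, with `F 1 = 1`
and `F 0 ≥ 0`, is the identity on `[0,1]`. -/
lemma rigid_aux (F : ℝ → ℝ) (hmono : Monotone F) (m : ℝ)
    (hae : ∀ᵐ t ∂(volume : Measure ℝ), t ∈ Ioc (0:ℝ) 1 → F t = t + m)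
    (hF1 : F 1 = 1) (hF0 : 0 ≤ F 0) :
    ∀ x ∈ Icc (0:ℝ) 1, F x = x := by
  have hbad : (volume : Measure ℝ) {t | ¬ (t ∈ Ioc (0:ℝ) 1 → F t = t + m)} = 0 :=
    ae_iff.mp hae
  have hioo : ∀ x ∈ Ioo (0:ℝ) 1, F x = x + m := by
    intro x hx
    by_contra hne
    rcases lt_or_gt_of_ne hne with hlt | hgt
    · set δ := min x (x + m - F x) with hδ
      have hδx : δ ≤ x := min_le_left _ _
      have hδ2 : δ ≤ x + m - F x := min_le_right _ _
      have hδpos : 0 < δ := lt_min hx.1 (by linarith)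
      have hsub : Ioo (x - δ) x ⊆ {t | ¬ (t ∈ Ioc (0:ℝ) 1 → F t = t + m)} := by
        intro t ht
        simp only [Set.mem_setOf_eq, Classical.not_imp]
        refine ⟨⟨by linarith [ht.1], le_trans ht.2.le hx.2.le⟩, ?_⟩
        have h1 : F t ≤ F x := hmono ht.2.le
        have h2 : F x < t + m := by linarith [ht.1]
        intro heq; linarith
      have h0 : (volume : Measure ℝ) (Ioo (x - δ) x) = 0 :=
        measure_mono_null hsub hbad
      rw [Real.volume_Ioo] at h0
      rw [ENNReal.ofReal_eq_zero] at h0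
      linarith
    · set δ := min (1 - x) (F x - x - m) with hδ
      have hδx : δ ≤ 1 - x := min_le_left _ _
      have hδ2 : δ ≤ F x - x - m := min_le_right _ _
      have hδpos : 0 < δ := lt_min (by linarith [hx.2]) (by linarith)
      have hsub : Ioo x (x + δ) ⊆ {t | ¬ (t ∈ Ioc (0:ℝ) 1 → F t = t + m)} := by
        intro t ht
        simp only [Set.mem_setOf_eq, Classical.not_imp]
        refine ⟨⟨lt_trans hx.1 ht.1, by linarith [ht.2]⟩, ?_⟩
        have h1 : F x ≤ F t := hmono ht.1.le
        have h2 : t + m < F x := by linarith [ht.2]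
        intro heq; linarith
      have h0 : (volume : Measure ℝ) (Ioo x (x + δ)) = 0 :=
        measure_mono_null hsub hbad
      rw [Real.volume_Ioo] at h0
      rw [ENNReal.ofReal_eq_zero] at h0
      linarith
  have hm0 : m = 0 := by
    have hmle : m ≤ 0 := by
      by_contra hm
      push_neg at hm
      set t := 1 - min m 1 / 2 with ht
      have h1 : 0 < min m 1 := lt_min hm one_pos
      have h2 : min m 1 ≤ 1 := min_le_right _ _
      have h3 : min m 1 ≤ m := min_le_left _ _
      have htI : t ∈ Ioo (0:ℝ) 1 := ⟨by simp only [ht]; linarith, by simp only [ht]; linarith⟩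
      have := hioo t htI
      have hle : F t ≤ F 1 := hmono htI.2.le
      rw [this, hF1] at hle
      simp only [ht] at hle
      linarith
    have hmge : 0 ≤ m := by
      by_contra hm
      push_neg at hm
      set t := min (-m) 1 / 2 with ht
      have h1 : 0 < min (-m) 1 := lt_min (by linarith) one_pos
      have h2 : min (-m) 1 ≤ 1 := min_le_right _ _
      have h3 : min (-m) 1 ≤ -m := min_le_left _ _
      have htI : t ∈ Ioo (0:ℝ) 1 := ⟨by simp only [ht]; linarith, by simp only [ht]; linarith⟩
      have := hioo t htI
      have hle : F 0 ≤ F t := hmono htI.1.le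
      rw [this] at hle
      simp only [ht] at hle
      linarith
    linarith
  intro x hx
  rcases eq_or_lt_of_le hx.1 with h0x | h0x
  · -- x = 0
    have hF00 : F 0 ≤ 0 := by
      by_contra hc
      push_neg at hc
      set t := min (F 0) 1 / 2 with ht
      have h1 : 0 < min (F 0) 1 := lt_min hc one_pos
      have h2 : min (F 0) 1 ≤ 1 := min_le_right _ _
      have h3 : min (F 0) 1 ≤ F 0 := min_le_left _ _
      have htI : t ∈ Ioo (0:ℝ) 1 := ⟨by simp only [ht]; linarith, by simp only [ht]; linarith⟩
      have heq := hioo t htI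
      have hle : F 0 ≤ F t := hmono htI.1.le
      rw [heq, hm0] at hle
      simp only [ht] at hle
      linarith
    rw [← h0x]
    linarith
  · rcases eq_or_lt_of_le hx.2 with hx1 | hx1
    · rw [hx1]; exact hF1
    · have := hioo x ⟨h0x, hx1⟩
      rw [this, hm0, add_zero]

/-- In box-car deconvolution, the variance of the naive moment estimator,
`Var(X) + 1/12` with `Var(X) = 2∫_0^1 x(1-F₀(x))dx - (∫_0^1 (1-F₀(x))dx)²`,
dominates the efficient variance `∫_0^1 F₀(t)(1-F₀(t))dt`, with equality iff
`F₀` is the uniform distribution function on `[0,1]`. -/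
theorem stmt7 (μ : Measure ℝ) [IsProbabilityMeasure μ] (hμ : μ (Icc 0 1) = 1)
    (F₀ : ℝ → ℝ) (hF₀ : ∀ t, F₀ t = (μ (Iic t)).toReal) :
    (∫ t in (0:ℝ)..1, F₀ t * (1 - F₀ t)) ≤
      (2 * (∫ x in (0:ℝ)..1, x * (1 - F₀ x))
        - (∫ x in (0:ℝ)..1, (1 - F₀ x)) ^ 2) + 1 / 12 ∧
    ((∫ t in (0:ℝ)..1, F₀ t * (1 - F₀ t)) =
      (2 * (∫ x in (0:ℝ)..1, x * (1 - F₀ x))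
        - (∫ x in (0:ℝ)..1, (1 - F₀ x)) ^ 2) + 1 / 12
      ↔ ∀ x ∈ Icc (0:ℝ) 1, F₀ x = x) := by
  have h01 : (0:ℝ) ≤ 1 := by norm_num
  have hmono : Monotone F₀ := by
    intro a b hab
    rw [hF₀, hF₀]
    exact ENNReal.toReal_mono (measure_ne_top μ _)
      (measure_mono (Iic_subset_Iic.mpr hab))
  have hFnn : ∀ t, 0 ≤ F₀ t := fun t => by rw [hF₀]; exact ENNReal.toReal_nonneg
  have hF1 : F₀ 1 = 1 := by
    have h1 : μ (Iic 1) = 1 := by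
      refine le_antisymm ?_ ?_
      · exact le_trans (measure_mono (subset_univ _)) (by simp)
      · rw [← hμ]; exact measure_mono Icc_subset_Iic_self
    rw [hF₀, h1]; simp
  have hF0 : 0 ≤ F₀ 0 := hFnn 0
  -- integrability
  have hiF : IntervalIntegrable F₀ volume 0 1 := hmono.intervalIntegrable
  have hiF2 : IntervalIntegrable (fun t => F₀ t ^ 2) volume 0 1 := by
    refine Monotone.intervalIntegrable (fun a b hab => ?_)
    exact pow_le_pow_left₀ (hFnn a) (hmono hab) 2
  have hitF : IntervalIntegrable (fun t => t * F₀ t) volume 0 1 := by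
    refine MonotoneOn.intervalIntegrable (fun a ha b hb hab => ?_)
    rw [uIcc_of_le h01] at ha hb
    exact mul_le_mul hab (hmono hab) (hFnn a) (le_trans ha.1 hab)
  have hit : IntervalIntegrable (fun t : ℝ => t) volume 0 1 := intervalIntegrable_id
  have hit2 : IntervalIntegrable (fun t : ℝ => t ^ 2) volume 0 1 :=
    (continuous_pow 2).intervalIntegrable 0 1
  have hif : IntervalIntegrable (fun t => F₀ t - t) volume 0 1 := hiF.sub hit
  have hf2eq : ∀ t : ℝ, (F₀ t - t) ^ 2 = (F₀ t ^ 2 - 2 * (t * F₀ t)) + t ^ 2 := by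
    intro t; ring
  have hif2 : IntervalIntegrable (fun t => (F₀ t - t) ^ 2) volume 0 1 := by
    simp only [hf2eq]
    exact (hiF2.sub (hitF.const_mul 2)).add hit2
  set I1 := ∫ t in (0:ℝ)..1, F₀ t with hI1
  set I2 := ∫ t in (0:ℝ)..1, t * F₀ t with hI2
  set I3 := ∫ t in (0:ℝ)..1, F₀ t ^ 2 with hI3
  set A := ∫ t in (0:ℝ)..1, (F₀ t - t) with hAdef
  set B := ∫ t in (0:ℝ)..1, (F₀ t - t - A) ^ 2 with hBdef
  have hifA2 : IntervalIntegrable (fun t => (F₀ t - t - A) ^ 2) volume 0 1 := by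
    have : ∀ t : ℝ, (F₀ t - t - A) ^ 2 = ((F₀ t - t) ^ 2 - (2 * A) * (F₀ t - t)) + A ^ 2 := by
      intro t; ring
    simp only [this]
    exact (hif2.sub (hif.const_mul _)).add intervalIntegrable_const
  -- computing the integrals
  have hid : (∫ t in (0:ℝ)..1, t) = 1 / 2 := by
    rw [integral_id]; norm_num
  have hid2 : (∫ t in (0:ℝ)..1, t ^ 2) = 1 / 3 := by
    rw [integral_pow]; norm_num
  have e1 : (∫ x in (0:ℝ)..1, x * (1 - F₀ x)) = 1 / 2 - I2 := by
    have h : ∀ x : ℝ, x * (1 - F₀ x) = x - x * F₀ x := fun x => by ring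
    simp only [h]
    rw [integral_sub hit hitF, hid]
  have e2 : (∫ x in (0:ℝ)..1, (1 - F₀ x)) = 1 - I1 := by
    rw [integral_sub intervalIntegrable_const hiF]
    simp
    rfl
  have e3 : (∫ t in (0:ℝ)..1, F₀ t * (1 - F₀ t)) = I1 - I3 := by
    have h : ∀ t : ℝ, F₀ t * (1 - F₀ t) = F₀ t - F₀ t ^ 2 := fun t => by ring
    simp only [h]
    rw [integral_sub hiF hiF2]
  have hA : A = I1 - 1 / 2 := by
    rw [hAdef, integral_sub hiF hit, hid]
  have hC : (∫ t in (0:ℝ)..1, (F₀ t - t) ^ 2) = I3 - 2 * I2 + 1 / 3 := by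
    simp only [hf2eq]
    rw [integral_add (hiF2.sub (hitF.const_mul 2)) hit2,
      integral_sub hiF2 (hitF.const_mul 2), intervalIntegral.integral_const_mul, hid2]
  have hB : B = (I3 - 2 * I2 + 1 / 3) - A ^ 2 := by
    have h : ∀ t : ℝ, (F₀ t - t - A) ^ 2
        = ((F₀ t - t) ^ 2 - (2 * A) * (F₀ t - t)) + A ^ 2 := by intro t; ring
    rw [hBdef]
    simp only [h]
    rw [integral_add (hif2.sub (hif.const_mul _)) intervalIntegrable_const,
      integral_sub hif2 (hif.const_mul _), intervalIntegral.integral_const_mul, hC, ← hAdef,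
      intervalIntegral.integral_const]
    simp only [sub_zero, one_smul]
    ring
  have key : (2 * (∫ x in (0:ℝ)..1, x * (1 - F₀ x))
      - (∫ x in (0:ℝ)..1, (1 - F₀ x)) ^ 2) + 1 / 12
      - (∫ t in (0:ℝ)..1, F₀ t * (1 - F₀ t)) = B := by
    rw [e1, e2, e3, hB, hA]; ring
  have hBnn : 0 ≤ B := by
    rw [hBdef]
    exact integral_nonneg h01 (fun t _ => sq_nonneg _)
  constructor
  · linarith
  constructor
  · intro heq
    have hB0 : B = 0 := by linarith
    rw [hBdef, integral_eq_zero_iff_of_le_of_nonneg_ae h01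
      (Filter.Eventually.of_forall (fun t => sq_nonneg _)) hifA2] at hB0
    have hae : ∀ᵐ t ∂(volume : Measure ℝ), t ∈ Ioc (0:ℝ) 1 → F₀ t = t + A := by
      rw [← ae_restrict_iff' measurableSet_Ioc]
      filter_upwards [hB0] with t ht
      have h2 : (F₀ t - t - A) ^ 2 = 0 := ht
      have := pow_eq_zero_iff (n := 2) (by norm_num) |>.mp h2
      linarith
    exact rigid_aux F₀ hmono A hae hF1 hF0
  · intro huni
    have hA0 : A = 0 := by
      have h : EqOn (fun t => F₀ t - t) (fun _ => (0:ℝ)) (uIcc (0:ℝ) 1) := by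
        intro t ht; rw [uIcc_of_le h01] at ht
        simp [huni t ht]
      rw [hAdef, integral_congr h]; simp
    have hB0 : B = 0 := by
      have h : EqOn (fun t => (F₀ t - t - A) ^ 2) (fun _ => (0:ℝ)) (uIcc (0:ℝ) 1) := by
        intro t ht; rw [uIcc_of_le h01] at ht
        simp [huni t ht, hA0]
      rw [hBdef, integral_congr h]; simp
    linarith
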